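/- Let N be a positive integer and 0 < χ₁ < ... < χ_N. Define ω_{ij} = 2√(χ_i χ_j)/(χ_i + χ_j) and the diagonal matrix γ = diag(γ_i) with γ_i = ∏_{k ≠ i} (χ_i + χ_k)/(χ_i − χ_k). Then ω is invertible with ω⁻¹ = γ ω γ. -/

import Mathlib

open Finset

open Polynomial in
lemma cauchy_like_key_interp {N : ℕ} (χ : Fin N → ℝ) (hinj : Function.Injective χ)
    (f : ℝ[X]) (hdeg : f.degree < (N : ℕ)) (x : ℝ) (hx : ∀ k, x ≠ χ k) :
    ∑ k, (∏ l ∈ univ.erase k, (χ k - χ l)⁻¹) * (x - χ k)⁻¹ * f.eval (χ k)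
      = f.eval x / ∏ k, (x - χ k) := by
  classical
  have hvs : Set.InjOn χ ↑(univ : Finset (Fin N)) := hinj.injOn
  have h1 : f = Lagrange.interpolate univ χ fun k => f.eval (χ k) :=
    Lagrange.eq_interpolate hvs (by simpa using hdeg)
  have h2 := Lagrange.eval_interpolate_not_at_node (s := univ) (v := χ) (x := x)
    (fun k => f.eval (χ k)) (fun k _ => hx k)
  rw [← h1, Lagrange.eval_nodal] at h2
  have hne : (∏ k, (x - χ k)) ≠ 0 :=
    prod_ne_zero_iff.mpr fun k _ => sub_ne_zero_of_ne (hx k)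
  rw [h2, mul_div_cancel_left₀ _ hne]
  exact sum_congr rfl fun k _ => by rw [Lagrange.nodalWeight]

/-- The Cauchy-like matrix `ω i j = 2√(χ i χ j)/(χ i + χ j)` built from strictly
ordered positive reals is invertible, with inverse `γ ω γ` where `γ` is the
diagonal matrix with entries `γ i = ∏_{k ≠ i} (χ i + χ k)/(χ i − χ k)`. -/
theorem cauchy_like_matrix_inv (N : ℕ) (hN : 0 < N) (χ : Fin N → ℝ)
    (hpos : ∀ i, 0 < χ i) (hmono : StrictMono χ) :
    let ω : Matrix (Fin N) (Fin N) ℝ :=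
      Matrix.of fun i j => 2 * Real.sqrt (χ i * χ j) / (χ i + χ j)
    let γ : Matrix (Fin N) (Fin N) ℝ :=
      Matrix.diagonal fun i => ∏ k ∈ Finset.univ.erase i, (χ i + χ k) / (χ i - χ k)
    IsUnit ω ∧ ω⁻¹ = γ * ω * γ := by
  intro ω γ
  classical
  have hinj : Function.Injective χ := hmono.injective
  have hsum : ∀ i k : Fin N, (0:ℝ) < χ i + χ k := fun i k => add_pos (hpos i) (hpos k)
  have hsumne : ∀ i k : Fin N, χ i + χ k ≠ 0 := fun i k => (hsum i k).ne'
  have hsubne : ∀ {i k : Fin N}, i ≠ k → χ i - χ k ≠ 0 := fun {i k} h =>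
    sub_ne_zero_of_ne fun he => h (hinj he)
  have main : ω * (γ * ω * γ) = 1 := by
    ext i j
    have hx : ∀ k, -χ j ≠ χ k := fun k => ((neg_neg_of_pos (hpos j)).trans (hpos k)).ne
    set R : Polynomial ℝ := ∏ l ∈ univ.erase i, (Polynomial.X + Polynomial.C (χ l)) with hR
    have hRmonic : R.Monic :=
      Polynomial.monic_prod_of_monic _ _ fun l _ => Polynomial.monic_X_add_C _
    have hRdeg : R.degree < (N : ℕ) := by
      rw [Polynomial.degree_eq_natDegree hRmonic.ne_zero, hR,
        Polynomial.natDegree_prod _ _ (fun l _ => (Polynomial.monic_X_add_C (χ l)).ne_zero)]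
      simp only [Polynomial.natDegree_X_add_C, sum_const, smul_eq_mul, mul_one,
        card_erase_of_mem (mem_univ i), card_univ, Fintype.card_fin]
      exact_mod_cast Nat.sub_lt hN one_pos
    have hReval : ∀ a : ℝ, R.eval a = ∏ l ∈ univ.erase i, (a + χ l) := fun a => by
      simp [hR, Polynomial.eval_prod]
    have key := cauchy_like_key_interp χ hinj R hRdeg (-χ j) hx
    set c : ℝ := -(2 * Real.sqrt (χ i) * Real.sqrt (χ j) *
      ((∏ l ∈ univ.erase j, (χ j + χ l)) / ∏ l ∈ univ.erase j, (χ j - χ l))) with hc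
    have hterm : ∀ k : Fin N, ω i k * (γ * ω * γ) k j
        = c * ((∏ l ∈ univ.erase k, (χ k - χ l)⁻¹) * (-χ j - χ k)⁻¹ * R.eval (χ k)) := by
      intro k
      have hE : (χ k + χ i) * R.eval (χ k) = (χ k + χ k) * ∏ l ∈ univ.erase k, (χ k + χ l) := by
        rw [hReval, mul_prod_erase univ (fun l => χ k + χ l) (mem_univ i),
          mul_prod_erase univ (fun l => χ k + χ l) (mem_univ k)]
      have hE' : R.eval (χ k) =
          (χ k + χ k) * (∏ l ∈ univ.erase k, (χ k + χ l)) / (χ k + χ i) := by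
        rw [eq_div_iff (hsumne k i)]; linarith [hE]
      have hsq1 : Real.sqrt (χ i * χ k) = Real.sqrt (χ i) * Real.sqrt (χ k) :=
        Real.sqrt_mul (hpos i).le _
      have hsq2 : Real.sqrt (χ k * χ j) = Real.sqrt (χ k) * Real.sqrt (χ j) :=
        Real.sqrt_mul (hpos k).le _
      simp only [ω, γ, Matrix.mul_diagonal, Matrix.diagonal_mul, Matrix.of_apply]
      rw [hE', hc, hsq1, hsq2]
      simp only [prod_div_distrib, prod_inv_distrib]
      set A := ∏ l ∈ univ.erase k, (χ k + χ l) with hA'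
      set D := ∏ l ∈ univ.erase k, (χ k - χ l) with hD'
      set Aj := ∏ l ∈ univ.erase j, (χ j + χ l) with hAj'
      set Dj := ∏ l ∈ univ.erase j, (χ j - χ l) with hDj'
      have hD : D ≠ 0 := prod_ne_zero_iff.mpr fun l hl => hsubne (mem_erase.mp hl).1.symm
      have hDj : Dj ≠ 0 := prod_ne_zero_iff.mpr fun l hl => hsubne (mem_erase.mp hl).1.symm
      obtain ⟨s, hsq, hs⟩ : ∃ s : ℝ, Real.sqrt (χ k) = s ∧ χ k = s * s :=
        ⟨Real.sqrt (χ k), rfl, (Real.mul_self_sqrt (hpos k).le).symm⟩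
      rw [hsq, hs]
      have h1 : χ i + s * s ≠ 0 := by rw [← hs]; exact hsumne i k
      have h2 : s * s + χ j ≠ 0 := by rw [← hs]; exact hsumne k j
      have h3 : s * s + χ i ≠ 0 := by rw [← hs]; exact hsumne k i
      have h4 : -χ j - s * s ≠ 0 := by
        rw [← hs]; have := hsumne j k; intro h; exact this (by linarith)
      rw [show (-χ j - s * s) = -(s * s + χ j) by ring]
      field_simp
      ring
    rw [Matrix.mul_apply]
    rw [sum_congr rfl fun k _ => hterm k, ← mul_sum, key]
    by_cases hij : i = j
    · subst hij
      rw [Matrix.one_apply_eq, hReval,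
        (mul_prod_erase univ (fun l => -χ i - χ l) (mem_univ i)).symm, hc]
      set Rev := ∏ l ∈ univ.erase i, (-χ i + χ l) with hRev'
      set Ai := ∏ l ∈ univ.erase i, (χ i + χ l) with hAi'
      set Di := ∏ l ∈ univ.erase i, (χ i - χ l) with hDi'
      have hprod2 : (∏ l ∈ univ.erase i, (-χ i - χ l)) = ∏ l ∈ univ.erase i, (-(χ i + χ l)) :=
        prod_congr rfl fun l _ => by ring
      set Pn := ∏ l ∈ univ.erase i, (-(χ i + χ l)) with hPn'
      have hAi : Ai ≠ 0 := prod_ne_zero_iff.mpr fun l _ => hsumne i l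
      have hDi : Di ≠ 0 := prod_ne_zero_iff.mpr fun l hl => hsubne (mem_erase.mp hl).1.symm
      have hPn : Pn ≠ 0 := prod_ne_zero_iff.mpr fun l _ => neg_ne_zero.mpr (hsumne i l)
      have hkey2 : Ai * Rev = Di * Pn := by
        rw [hAi', hRev', hDi', hPn', ← prod_mul_distrib, ← prod_mul_distrib]
        exact prod_congr rfl fun l _ => by ring
      have hRev2 : Rev = Di * Pn / Ai := by
        rw [eq_div_iff hAi]; linarith [hkey2]
      have hss : Real.sqrt (χ i) * Real.sqrt (χ i) = χ i := Real.mul_self_sqrt (hpos i).le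
      have hne2 : -χ i - χ i ≠ 0 := by have := hpos i; intro h; linarith
      rw [hprod2, hRev2]
      rw [show (2:ℝ) * Real.sqrt (χ i) * Real.sqrt (χ i) = 2 * χ i by rw [mul_assoc, hss]]
      have hχi : χ i ≠ 0 := (hpos i).ne'
      field_simp
      ring
    · rw [Matrix.one_apply_ne hij]
      have : R.eval (-χ j) = 0 := by
        rw [hReval]
        exact prod_eq_zero (mem_erase.mpr ⟨fun h => hij h.symm, mem_univ j⟩) (by ring)
      rw [this, zero_div, mul_zero]
  exact ⟨(Matrix.isUnit_iff_isUnit_det ω).mpr (Matrix.isUnit_det_of_right_inverse main),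
    Matrix.inv_eq_right_inv main⟩
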